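/- Let (T₁,T₂) and (C₁,C₂) be random vectors in ℝ² with (T₁,T₂) independent of (C₁,C₂). Define Z_i = min(T_i,C_i), Δ_i = 1{T_i ≤ C_i}, T* = min(T₁,T₂), C* = min(C₁,C₂), Z* = min(Z₁,Z₂), Δ* = 1{T* ≤ C*}, and η = 1 meaning Z₁ > Z₂. Fix reals j < t with P{T₁ ≥ t, T₂ = j} > 0 and P{Z₁ ≥ t, Z* = j, Δ* = 1, η = 1} > 0. Then P{T₁ = t, T₂ = j} / P{T₁ ≥ t, T₂ = j} = P{Z₁ = t, Δ₁ = 1, Z* = j, Δ* = 1, η = 1} / P{Z₁ ≥ t, Z* = j, Δ* = 1, η = 1}. -/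

import Mathlib

open MeasureTheory ProbabilityTheory

lemma stmt8_num_iff {T1 T2 C1 C2 j t : ℝ} (hjt : j < t) :
    (min T1 C1 = t ∧ T1 ≤ C1 ∧ min (min T1 C1) (min T2 C2) = j ∧
      min T1 T2 ≤ min C1 C2 ∧ min T2 C2 < min T1 C1)
    ↔ ((T1 = t ∧ T2 = j) ∧ (t ≤ C1 ∧ j ≤ C2)) := by
  constructor
  · rintro ⟨h1, h2, h3, h4, h5⟩
    rw [min_eq_left h2] at h1 h3 h5
    rw [min_eq_right h5.le] at h3
    have hC1 : t ≤ C1 := h1 ▸ h2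
    rcases lt_or_ge C2 T2 with h | h
    · exfalso
      rw [min_eq_right h.le] at h3
      have hC2C1 : C2 ≤ C1 := by linarith
      rw [min_eq_right hC2C1] at h4
      have hlt : j < min T1 T2 := lt_min_iff.2 ⟨by linarith, by linarith⟩
      linarith
    · rw [min_eq_left h] at h3
      exact ⟨⟨h1, h3⟩, hC1, h3 ▸ h⟩
  · rintro ⟨⟨hT1, hT2⟩, hC1, hC2⟩
    have hTC : T1 ≤ C1 := by rw [hT1]; exact hC1
    have e1 : min T1 C1 = t := by rw [min_eq_left hTC]; exact hT1
    have e2 : min T2 C2 = j := by rw [hT2]; exact min_eq_left hC2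
    have e3 : min T1 T2 = j := by rw [hT2]; exact min_eq_right (by rw [hT1]; exact hjt.le)
    refine ⟨e1, hTC, ?_, ?_, ?_⟩
    · rw [e1, e2]; exact min_eq_right hjt.le
    · rw [e3]; exact le_min (by linarith) hC2
    · rw [e1, e2]; exact hjt

lemma stmt8_den_iff {T1 T2 C1 C2 j t : ℝ} (hjt : j < t) :
    (t ≤ min T1 C1 ∧ min (min T1 C1) (min T2 C2) = j ∧
      min T1 T2 ≤ min C1 C2 ∧ min T2 C2 < min T1 C1)
    ↔ ((t ≤ T1 ∧ T2 = j) ∧ (t ≤ C1 ∧ j ≤ C2)) := by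
  constructor
  · rintro ⟨h1, h3, h4, h5⟩
    have hT1 : t ≤ T1 := le_trans h1 (min_le_left _ _)
    have hC1 : t ≤ C1 := le_trans h1 (min_le_right _ _)
    rw [min_eq_right h5.le] at h3
    rcases lt_or_ge C2 T2 with h | h
    · exfalso
      rw [min_eq_right h.le] at h3
      have hC2C1 : C2 ≤ C1 := by linarith
      rw [min_eq_right hC2C1] at h4
      have hlt : j < min T1 T2 := lt_min_iff.2 ⟨by linarith, by linarith⟩
      linarith
    · rw [min_eq_left h] at h3
      exact ⟨⟨hT1, h3⟩, hC1, h3 ▸ h⟩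
  · rintro ⟨⟨hT1, hT2⟩, hC1, hC2⟩
    have e2 : min T2 C2 = j := by rw [hT2]; exact min_eq_left hC2
    refine ⟨le_min hT1 hC1, ?_, ?_, ?_⟩
    · rw [e2]
      exact min_eq_right (le_min (by linarith) (by linarith))
    · refine le_min (le_trans (min_le_right _ _) (by linarith)) ?_
      exact le_trans (min_le_right _ _) (by rw [hT2]; exact hC2)
    · rw [e2]
      exact lt_min (by linarith) (by linarith)

theorem stmt8 {Ω : Type*} [MeasurableSpace Ω] (μ : Measure Ω) [IsProbabilityMeasure μ]
    (T₁ T₂ C₁ C₂ : Ω → ℝ)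
    (hT₁ : Measurable T₁) (hT₂ : Measurable T₂)
    (hC₁ : Measurable C₁) (hC₂ : Measurable C₂)
    (hind : IndepFun (fun ω => (T₁ ω, T₂ ω)) (fun ω => (C₁ ω, C₂ ω)) μ)
    (j t : ℝ) (hjt : j < t)
    (hT : 0 < μ {ω | t ≤ T₁ ω ∧ T₂ ω = j})
    (hZ : 0 < μ {ω | t ≤ min (T₁ ω) (C₁ ω) ∧
        min (min (T₁ ω) (C₁ ω)) (min (T₂ ω) (C₂ ω)) = j ∧
        min (T₁ ω) (T₂ ω) ≤ min (C₁ ω) (C₂ ω) ∧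
        min (T₂ ω) (C₂ ω) < min (T₁ ω) (C₁ ω)}) :
    μ {ω | T₁ ω = t ∧ T₂ ω = j} / μ {ω | t ≤ T₁ ω ∧ T₂ ω = j}
      = μ {ω | min (T₁ ω) (C₁ ω) = t ∧ T₁ ω ≤ C₁ ω ∧
            min (min (T₁ ω) (C₁ ω)) (min (T₂ ω) (C₂ ω)) = j ∧
            min (T₁ ω) (T₂ ω) ≤ min (C₁ ω) (C₂ ω) ∧
            min (T₂ ω) (C₂ ω) < min (T₁ ω) (C₁ ω)} /
          μ {ω | t ≤ min (T₁ ω) (C₁ ω) ∧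
            min (min (T₁ ω) (C₁ ω)) (min (T₂ ω) (C₂ ω)) = j ∧
            min (T₁ ω) (T₂ ω) ≤ min (C₁ ω) (C₂ ω) ∧
            min (T₂ ω) (C₂ ω) < min (T₁ ω) (C₁ ω)} := by
  set f : Ω → ℝ × ℝ := fun ω => (T₁ ω, T₂ ω) with hf
  set g : Ω → ℝ × ℝ := fun ω => (C₁ ω, C₂ ω) with hg
  have hsA : MeasurableSet {p : ℝ × ℝ | p.1 = t ∧ p.2 = j} :=
    ((measurableSet_singleton t).preimage measurable_fst).inter
      ((measurableSet_singleton j).preimage measurable_snd)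
  have hsB : MeasurableSet {p : ℝ × ℝ | t ≤ p.1 ∧ p.2 = j} :=
    (measurableSet_Ici.preimage measurable_fst).inter
      ((measurableSet_singleton j).preimage measurable_snd)
  have hsE : MeasurableSet {p : ℝ × ℝ | t ≤ p.1 ∧ j ≤ p.2} :=
    (measurableSet_Ici.preimage measurable_fst).inter
      (measurableSet_Ici.preimage measurable_snd)
  have enum : {ω | min (T₁ ω) (C₁ ω) = t ∧ T₁ ω ≤ C₁ ω ∧
      min (min (T₁ ω) (C₁ ω)) (min (T₂ ω) (C₂ ω)) = j ∧
      min (T₁ ω) (T₂ ω) ≤ min (C₁ ω) (C₂ ω) ∧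
      min (T₂ ω) (C₂ ω) < min (T₁ ω) (C₁ ω)}
      = f ⁻¹' {p : ℝ × ℝ | p.1 = t ∧ p.2 = j} ∩ g ⁻¹' {p : ℝ × ℝ | t ≤ p.1 ∧ j ≤ p.2} := by
    ext ω
    simpa [Set.mem_setOf_eq, Set.mem_inter_iff, and_assoc] using stmt8_num_iff (hjt := hjt)
      (T1 := T₁ ω) (T2 := T₂ ω) (C1 := C₁ ω) (C2 := C₂ ω)
  have eden : {ω | t ≤ min (T₁ ω) (C₁ ω) ∧
      min (min (T₁ ω) (C₁ ω)) (min (T₂ ω) (C₂ ω)) = j ∧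
      min (T₁ ω) (T₂ ω) ≤ min (C₁ ω) (C₂ ω) ∧
      min (T₂ ω) (C₂ ω) < min (T₁ ω) (C₁ ω)}
      = f ⁻¹' {p : ℝ × ℝ | t ≤ p.1 ∧ p.2 = j} ∩ g ⁻¹' {p : ℝ × ℝ | t ≤ p.1 ∧ j ≤ p.2} := by
    ext ω
    simpa [Set.mem_setOf_eq, Set.mem_inter_iff, and_assoc, hf, hg] using stmt8_den_iff (hjt := hjt)
      (T1 := T₁ ω) (T2 := T₂ ω) (C1 := C₁ ω) (C2 := C₂ ω)
  have mulA := hind.measure_inter_preimage_eq_mul _ _ hsA hsE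
  have mulB := hind.measure_inter_preimage_eq_mul _ _ hsB hsE
  have hAset : f ⁻¹' {p : ℝ × ℝ | p.1 = t ∧ p.2 = j} = {ω | T₁ ω = t ∧ T₂ ω = j} := rfl
  have hBset : f ⁻¹' {p : ℝ × ℝ | t ≤ p.1 ∧ p.2 = j} = {ω | t ≤ T₁ ω ∧ T₂ ω = j} := rfl
  rw [enum, eden, mulA, mulB, hAset, hBset]
  have hE0 : μ (g ⁻¹' {p : ℝ × ℝ | t ≤ p.1 ∧ j ≤ p.2}) ≠ 0 := by
    intro h0
    rw [eden, mulB, h0, mul_zero] at hZ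
    exact lt_irrefl 0 hZ
  rw [ENNReal.mul_div_mul_right _ _ hE0 (measure_ne_top μ _)]
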